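/- (Series formula for the differential of the matrix exponential.) For all A, X ∈ Matrix (Fin m) (Fin m) ℝ, the Fréchet derivative of the matrix exponential satisfies (d exp)_A(X) = Σ_{k=0}^∞ (1/(k+1)!) • ((−ad(A))^k)(exp(A) * X), where ad(A)Y := A*Y − Y*A is the adjoint action, (−ad(A))^k denotes its k-fold iterate as a linear map on matrices, and the series converges (as a tsum) in Matrix (Fin m) (Fin m) ℝ. -/

import Mathlib

attribute [local instance] Matrix.linftyOpNormedAddCommGroup Matrix.linftyOpNormedRing
  Matrix.linftyOpNormedAlgebra

/-- The adjoint action `ad A : Y ↦ A*Y - Y*A`, as a linear endomorphism of matrices. -/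
noncomputable def adAction (m : ℕ) (A : Matrix (Fin m) (Fin m) ℝ) :
    Matrix (Fin m) (Fin m) ℝ →ₗ[ℝ] Matrix (Fin m) (Fin m) ℝ :=
  LinearMap.mulLeft ℝ A - LinearMap.mulRight ℝ A

namespace Statement10Aux

open Finset Finset.Nat NormedSpace

abbrev Mat (m : ℕ) := Matrix (Fin m) (Fin m) ℝ

noncomputable scoped instance (m : ℕ) : UniformSpace (Mat m) := PseudoMetricSpace.toUniformSpace

noncomputable scoped instance (m : ℕ) : TopologicalSpace (Mat m) := PseudoMetricSpace.toUniformSpace.toTopologicalSpace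

noncomputable instance (m : ℕ) : CompleteSpace (Mat m) := FiniteDimensional.complete ℝ _

variable {m : ℕ}

/-- The candidate derivative of `fun Y => Y ^ n` at `B`. -/
noncomputable def Pd (m : ℕ) (B : Mat m) (n : ℕ) : Mat m →L[ℝ] Mat m :=
  ∑ i ∈ Finset.range n,
    (ContinuousLinearMap.mul ℝ (Mat m) (B ^ i)).comp
      ((ContinuousLinearMap.mul ℝ (Mat m)).flip (B ^ (n - 1 - i)))

lemma Pd_apply (B : Mat m) (n : ℕ) (X : Mat m) :
    Pd m B n X = ∑ i ∈ Finset.range n, B ^ i * X * B ^ (n - 1 - i) := by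
  simp [Pd, ContinuousLinearMap.sum_apply, mul_assoc]

lemma hasFDerivAt_pow_aux (n : ℕ) (B : Mat m) :
    HasFDerivAt (fun Y : Mat m => Y ^ n) (Pd m B n) B := by
  induction n with
  | zero =>
      have h0 : (Pd m B 0) = 0 := by simp [Pd]
      rw [h0]
      simpa using hasFDerivAt_const (1 : Mat m) B
  | succ n ih =>
      have h := (hasFDerivAt_id B).mul' ih
      have heq : (fun Y : Mat m => Y ^ (n + 1)) = fun Y => Y * Y ^ n :=
        funext fun Y => pow_succ' Y n
      rw [heq]
      refine h.congr_fderiv (Eq.symm ?_)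
      refine ContinuousLinearMap.ext fun X => ?_
      simp only [ContinuousLinearMap.add_apply, ContinuousLinearMap.smul_apply,
        ContinuousLinearMap.smulRight_apply, ContinuousLinearMap.coe_id',
        id_eq, Pd_apply, smul_eq_mul, op_smul_eq_mul]
      rw [Finset.sum_range_succ', Finset.mul_sum]
      congr 1
      · refine Finset.sum_congr rfl fun i _ => ?_
        rw [← mul_assoc, ← mul_assoc, ← pow_succ']
        rw [show n + 1 - 1 - (i + 1) = n - 1 - i from by omega]
      · simp

lemma Pd_norm_le [Nonempty (Fin m)] (n : ℕ) {B : Mat m} {r : ℝ} (hB : ‖B‖ ≤ r) :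
    ‖Pd m B n‖ ≤ n * r ^ (n - 1) := by
  have hr : 0 ≤ r := le_trans (norm_nonneg B) hB
  calc ‖Pd m B n‖
      ≤ ∑ i ∈ Finset.range n, ‖(ContinuousLinearMap.mul ℝ (Mat m) (B ^ i)).comp
          ((ContinuousLinearMap.mul ℝ (Mat m)).flip (B ^ (n - 1 - i)))‖ :=
        norm_sum_le _ _
    _ ≤ ∑ _i ∈ Finset.range n, r ^ (n - 1) := by
        refine Finset.sum_le_sum fun i hi => ?_
        have hi' : i < n := Finset.mem_range.mp hi
        have h1 : ‖(ContinuousLinearMap.mul ℝ (Mat m) (B ^ i))‖ ≤ ‖B ^ i‖ :=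
          ContinuousLinearMap.opNorm_mul_apply_le _ _ _
        have h2 : ‖(ContinuousLinearMap.mul ℝ (Mat m)).flip (B ^ (n - 1 - i))‖ ≤
            ‖B ^ (n - 1 - i)‖ := by
          calc ‖(ContinuousLinearMap.mul ℝ (Mat m)).flip (B ^ (n - 1 - i))‖
              ≤ ‖(ContinuousLinearMap.mul ℝ (Mat m)).flip‖ * ‖B ^ (n - 1 - i)‖ :=
                ContinuousLinearMap.le_opNorm _ _
            _ ≤ 1 * ‖B ^ (n - 1 - i)‖ := by
                refine mul_le_mul_of_nonneg_right ?_ (norm_nonneg _)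
                rw [ContinuousLinearMap.opNorm_flip]
                exact ContinuousLinearMap.opNorm_mul_le ℝ (Mat m)
            _ = ‖B ^ (n - 1 - i)‖ := one_mul _
        calc ‖(ContinuousLinearMap.mul ℝ (Mat m) (B ^ i)).comp
              ((ContinuousLinearMap.mul ℝ (Mat m)).flip (B ^ (n - 1 - i)))‖
            ≤ ‖(ContinuousLinearMap.mul ℝ (Mat m) (B ^ i))‖ *
              ‖(ContinuousLinearMap.mul ℝ (Mat m)).flip (B ^ (n - 1 - i))‖ :=
              ContinuousLinearMap.opNorm_comp_le _ _
          _ ≤ ‖B ^ i‖ * ‖B ^ (n - 1 - i)‖ :=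
              mul_le_mul h1 h2 (norm_nonneg _) (le_trans (norm_nonneg _) h1)
          _ ≤ ‖B‖ ^ i * ‖B‖ ^ (n - 1 - i) :=
              mul_le_mul (norm_pow_le _ _) (norm_pow_le _ _) (norm_nonneg _) (by positivity)
          _ = ‖B‖ ^ (n - 1) := by rw [← pow_add]; congr 1; omega
          _ ≤ r ^ (n - 1) := pow_le_pow_left₀ (norm_nonneg _) hB _
    _ = n * r ^ (n - 1) := by simp [Finset.sum_const, mul_comm]


section
variable [Nonempty (Fin m)]

lemma summable_master {a b : ℝ} (ha : 0 ≤ a) (hb : 0 ≤ b) :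
    Summable fun pq : ℕ × ℕ => a ^ pq.1 / (pq.1.factorial) * (b ^ pq.2 / pq.2.factorial) :=
  (Real.summable_pow_div_factorial a).mul_of_nonneg (Real.summable_pow_div_factorial b)
    (fun p => by positivity) (fun q => by positivity)

lemma fact_mul_fact_le (p q : ℕ) :
    ((p.factorial : ℝ) * q.factorial) ≤ ((p + q + 1).factorial : ℝ) := by
  have h1 : p.factorial * q.factorial ≤ (p + q + 1).factorial :=
    le_trans (Nat.le_of_dvd (Nat.factorial_pos _)
      (Nat.factorial_mul_factorial_dvd_factorial_add p q))
      (Nat.factorial_le (Nat.le_succ _))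
  exact_mod_cast h1

lemma inv_fact_add_le (p q : ℕ) :
    (((p + q + 1).factorial : ℝ))⁻¹ ≤ ((p.factorial : ℝ) * q.factorial)⁻¹ := by
  apply inv_anti₀ (by positivity) (fact_mul_fact_le p q)

lemma summable_Pd_smul (A : Mat m) :
    Summable fun n : ℕ => (n.factorial : ℝ)⁻¹ • Pd m A n := by
  set r : ℝ := ‖A‖ + 1 with hrdef
  have hu_sum : Summable fun n : ℕ => (n.factorial : ℝ)⁻¹ * (n * r ^ (n - 1)) := by
    rw [← summable_nat_add_iff 1]
    refine Summable.congr (Real.summable_pow_div_factorial r) fun n => ?_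
    rw [Nat.factorial_succ]
    have h3 : (n.factorial : ℝ) ≠ 0 := by exact_mod_cast Nat.factorial_ne_zero n
    push_cast
    field_simp
  refine Summable.of_norm_bounded hu_sum fun n => ?_
  rw [norm_smul ((n.factorial : ℝ))⁻¹ (Pd m A n), norm_inv, Real.norm_natCast]
  exact mul_le_mul_of_nonneg_left (Pd_norm_le n (by simp [hrdef])) (by positivity)

lemma hasFDerivAt_exp_aux (A : Mat m) :
    HasFDerivAt (NormedSpace.exp) (∑' n : ℕ, ((n.factorial : ℝ))⁻¹ • Pd m A n) A := by
  set r : ℝ := ‖A‖ + 1 with hrdef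
  set u : ℕ → ℝ := fun n => (n.factorial : ℝ)⁻¹ * (n * r ^ (n - 1)) with hu
  have hu_sum : Summable u := by
    rw [hu, ← summable_nat_add_iff 1]
    refine Summable.congr (Real.summable_pow_div_factorial r) fun n => ?_
    rw [Nat.factorial_succ]
    have h3 : (n.factorial : ℝ) ≠ 0 := by exact_mod_cast Nat.factorial_ne_zero n
    push_cast
    field_simp
  have hmem : A ∈ Metric.ball (0 : Mat m) r := by
    rw [mem_ball_zero_iff]; simp [hrdef]
  have H := hasFDerivAt_tsum_of_isPreconnected hu_sum Metric.isOpen_ball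
    (convex_ball (0 : Mat m) r).isPreconnected
    (fun n x _ => (hasFDerivAt_pow_aux n x).const_smul ((n.factorial : ℝ))⁻¹)
    (fun n x hx => by
      simp only [norm_smul, norm_inv, Real.norm_natCast]
      exact mul_le_mul_of_nonneg_left
        (Pd_norm_le n (le_of_lt (mem_ball_zero_iff.mp hx))) (by positivity))
    hmem (NormedSpace.expSeries_summable' (𝕂 := ℝ) A) hmem
  rw [NormedSpace.exp_eq_tsum ℝ]
  exact H

lemma fderiv_exp_apply (A X : Mat m) :
    fderiv ℝ (NormedSpace.exp) A X = ∑' n : ℕ, (n.factorial : ℝ)⁻¹ • (Pd m A n X) := by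
  rw [(hasFDerivAt_exp_aux A).fderiv]
  have h := (ContinuousLinearMap.apply ℝ (Mat m) X).map_tsum (summable_Pd_smul A)
  simp only [ContinuousLinearMap.apply_apply, ContinuousLinearMap.smul_apply] at h
  exact h


lemma summable_g (A X : Mat m) :
    Summable fun pq : ℕ × ℕ =>
      (((pq.1 + pq.2 + 1).factorial : ℝ))⁻¹ • (A ^ pq.1 * X * A ^ pq.2) := by
  refine Summable.of_norm_bounded
    (((summable_master (norm_nonneg A) (norm_nonneg A))).mul_left ‖X‖) fun pq => ?_
  obtain ⟨p, q⟩ := pq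
  simp only []
  rw [norm_smul (((p + q + 1).factorial : ℝ))⁻¹ (A ^ p * X * A ^ q), norm_inv,
    Real.norm_natCast]
  have h1 : ‖A ^ p * X * A ^ q‖ ≤ ‖A‖ ^ p * ‖X‖ * ‖A‖ ^ q := by
    calc ‖A ^ p * X * A ^ q‖ ≤ ‖A ^ p * X‖ * ‖A ^ q‖ := norm_mul_le _ _
      _ ≤ ‖A ^ p‖ * ‖X‖ * ‖A ^ q‖ := by
          exact mul_le_mul_of_nonneg_right (norm_mul_le _ _) (norm_nonneg _)
      _ ≤ ‖A‖ ^ p * ‖X‖ * ‖A‖ ^ q := by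
          gcongr <;> exact norm_pow_le _ _
  calc ((((p + q + 1).factorial : ℝ))⁻¹) * ‖A ^ p * X * A ^ q‖
      ≤ (((p.factorial : ℝ) * q.factorial))⁻¹ * (‖A‖ ^ p * ‖X‖ * ‖A‖ ^ q) := by
        exact mul_le_mul (inv_fact_add_le p q) h1 (norm_nonneg _) (by positivity)
    _ = ‖X‖ * (‖A‖ ^ p / p.factorial * (‖A‖ ^ q / q.factorial)) := by
        have h3 : (p.factorial : ℝ) ≠ 0 := by exact_mod_cast Nat.factorial_ne_zero p
        have h4 : (q.factorial : ℝ) ≠ 0 := by exact_mod_cast Nat.factorial_ne_zero q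
        field_simp

/-- Regrouping a summable family over `ℕ × ℕ` as an iterated sum along antidiagonals. -/
lemma tsum_prod_eq_antidiagonal {f : ℕ × ℕ → Mat m} (hf : Summable f) :
    ∑' pq : ℕ × ℕ, f pq = ∑' n : ℕ, ∑ c ∈ Finset.HasAntidiagonal.antidiagonal n, f c := by
  rw [← Finset.HasAntidiagonal.sigmaAntidiagonalEquivProd.tsum_eq f]
  have hs : Summable (fun c : (Σ n : ℕ, {x // x ∈ Finset.HasAntidiagonal.antidiagonal n}) =>
      f (Finset.HasAntidiagonal.sigmaAntidiagonalEquivProd c)) :=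
    Finset.HasAntidiagonal.sigmaAntidiagonalEquivProd.summable_iff.mpr hf
  rw [Summable.tsum_sigma hs]
  refine tsum_congr fun n => ?_
  rw [← Finset.tsum_subtype]
  rfl

lemma lhs_eq (A X : Mat m) :
    (∑' n : ℕ, (n.factorial : ℝ)⁻¹ • (Pd m A n X)) =
      ∑' pq : ℕ × ℕ, (((pq.1 + pq.2 + 1).factorial : ℝ))⁻¹ • (A ^ pq.1 * X * A ^ pq.2) := by
  have hsum_applied : Summable fun n : ℕ => (n.factorial : ℝ)⁻¹ • (Pd m A n X) := by
    have h := (summable_Pd_smul A).mapL (ContinuousLinearMap.apply ℝ (Mat m) X)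
    simpa only [ContinuousLinearMap.apply_apply, ContinuousLinearMap.smul_apply] using h
  rw [Summable.tsum_eq_zero_add hsum_applied]
  have h0 : ((Nat.factorial 0 : ℝ))⁻¹ • (Pd m A 0 X) = 0 := by simp [Pd]
  rw [h0, zero_add, tsum_prod_eq_antidiagonal (summable_g A X)]
  refine tsum_congr fun n => ?_
  rw [Finset.Nat.sum_antidiagonal_eq_sum_range_succ_mk, Pd_apply, Finset.smul_sum]
  refine Finset.sum_congr rfl fun i hi => ?_
  have hi' : i ≤ n := Nat.lt_succ_iff.mp (Finset.mem_range.mp hi)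
  rw [show i + (n - i) + 1 = n + 1 from by omega, show n + 1 - 1 - i = n - i from by omega]

lemma neg_ad_pow (A : Mat m) (k : ℕ) (Y : Mat m) :
    ((-adAction m A) ^ k) Y =
      ∑ c ∈ Finset.HasAntidiagonal.antidiagonal k,
        ((-1 : ℝ) ^ c.1 * (k.choose c.2 : ℝ)) • (A ^ c.1 * Y * A ^ c.2) := by
  have hneg : -adAction m A =
      LinearMap.mulRight ℝ A + (-1 : ℝ) • LinearMap.mulLeft ℝ A := by
    refine LinearMap.ext fun Z => ?_
    simp only [adAction, LinearMap.neg_apply, LinearMap.sub_apply, LinearMap.add_apply,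
      LinearMap.smul_apply, LinearMap.mulLeft_apply, LinearMap.mulRight_apply,
      neg_one_smul]
    abel
  have hcomm : Commute (LinearMap.mulRight ℝ A) ((-1 : ℝ) • LinearMap.mulLeft ℝ A) :=
    ((LinearMap.commute_mulLeft_right A A).symm).smul_right _
  rw [hneg, hcomm.add_pow']
  rw [← Finset.Nat.sum_antidiagonal_swap]
  rw [LinearMap.sum_apply]
  refine Finset.sum_congr rfl fun c _hc => ?_
  rw [smul_pow, LinearMap.pow_mulLeft, LinearMap.pow_mulRight]
  simp only [LinearMap.smul_apply, Module.End.mul_apply, LinearMap.mulLeft_apply,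
    LinearMap.mulRight_apply, smul_eq_mul, Prod.fst_swap, Prod.snd_swap]
  rw [← Nat.cast_smul_eq_nsmul ℝ, smul_mul_assoc, smul_smul, mul_comm]

end

lemma key0 (p : ℕ) : ∀ q : ℕ,
    ∑ j ∈ Finset.range (p+1), (-1 : ℝ)^j * (p.choose j : ℝ) / ((q : ℝ) + j + 1) =
      (p.factorial : ℝ) * q.factorial / ((p+q+1).factorial : ℝ) := by
  induction p with
  | zero =>
      intro q
      have e : (((q+1).factorial : ℕ) : ℝ) = (q+1) * q.factorial := by
        exact_mod_cast Nat.factorial_succ q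
      rw [show 0+q+1 = q+1 from by omega]
      have hq : (q : ℝ) + 1 ≠ 0 := by positivity
      have hf : (q.factorial : ℝ) ≠ 0 := by exact_mod_cast Nat.factorial_ne_zero q
      simp only [Finset.sum_range_one, pow_zero, Nat.choose_self, Nat.cast_one,
        Nat.cast_zero, Nat.factorial_zero, one_mul, zero_add, add_zero]
      rw [e]
      field_simp
  | succ p ih =>
      intro q
      have hu : ∑ j ∈ Finset.range (p+1), (-1 : ℝ)^j * (p.choose j : ℝ) / ((q : ℝ) + j + 2)
          = (p.factorial : ℝ) * (q+1).factorial / ((p+q+2).factorial : ℝ) := by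
        have h := ih (q+1)
        rw [show p+(q+1)+1 = p+q+2 from by omega] at h
        calc ∑ j ∈ Finset.range (p+1), (-1 : ℝ)^j * (p.choose j : ℝ) / ((q : ℝ) + j + 2)
            = ∑ j ∈ Finset.range (p+1), (-1 : ℝ)^j * (p.choose j : ℝ) / (((q+1 : ℕ) : ℝ) + j + 1) := by
              refine Finset.sum_congr rfl fun j _ => ?_
              push_cast
              ring_nf
          _ = (p.factorial : ℝ) * (q+1).factorial / ((p+q+2).factorial : ℝ) := h
      have hs := Finset.sum_range_succ'
        (fun j => (-1 : ℝ)^j * ((p+1).choose j : ℝ) / ((q : ℝ) + j + 1)) (p+1)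
      rw [hs]
      have hterm : ∀ j ∈ Finset.range (p+1),
          (-1 : ℝ)^(j+1) * ((p+1).choose (j+1) : ℝ) / ((q : ℝ) + ((j+1 : ℕ) : ℝ) + 1) =
            (-1 : ℝ)^(j+1) * (p.choose (j+1) : ℝ) / ((q : ℝ) + ((j+1 : ℕ) : ℝ) + 1)
              - (-1 : ℝ)^j * (p.choose j : ℝ) / ((q : ℝ) + (j : ℝ) + 2) := by
        intro j _
        rw [Nat.choose_succ_succ]
        push_cast
        ring
      rw [Finset.sum_congr rfl hterm, Finset.sum_sub_distrib]
      have hfirst : ∑ j ∈ Finset.range (p+1),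
            (-1 : ℝ)^(j+1) * (p.choose (j+1) : ℝ) / ((q : ℝ) + ((j+1 : ℕ) : ℝ) + 1)
            + (-1 : ℝ)^0 * ((p+1).choose 0 : ℝ) / ((q : ℝ) + ((0 : ℕ) : ℝ) + 1)
          = (p.factorial : ℝ) * q.factorial / ((p+q+1).factorial : ℝ) := by
        have h2 := Finset.sum_range_succ'
          (fun j => (-1 : ℝ)^j * (p.choose j : ℝ) / ((q : ℝ) + j + 1)) (p+1)
        have h3 := Finset.sum_range_succ
          (fun j => (-1 : ℝ)^j * (p.choose j : ℝ) / ((q : ℝ) + j + 1)) (p+1)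
        simp only [Nat.choose_zero_right, Nat.cast_one, pow_zero] at h2 h3 ⊢
        rw [← h2, h3, Nat.choose_succ_self]
        simp [ih q]
      rw [sub_eq_add_neg, add_right_comm, ← sub_eq_add_neg, hfirst, hu]
      have e1 : (((p+q+2).factorial : ℕ) : ℝ) = (p+q+2) * (p+q+1).factorial := by
        exact_mod_cast Nat.factorial_succ (p+q+1)
      have e2 : (((q+1).factorial : ℕ) : ℝ) = (q+1) * q.factorial := by
        exact_mod_cast Nat.factorial_succ q
      have e3 : (((p+1).factorial : ℕ) : ℝ) = (p+1) * p.factorial := by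
        exact_mod_cast Nat.factorial_succ p
      rw [show p+1+q+1 = p+q+2 from by omega, e1, e2, e3]
      have n1 : ((p+q+1).factorial : ℝ) ≠ 0 := by exact_mod_cast Nat.factorial_ne_zero _
      have n2 : ((p : ℝ)+q+2) ≠ 0 := by positivity
      field_simp
      ring

lemma key (p q : ℕ) :
    ∑ c ∈ Finset.HasAntidiagonal.antidiagonal p,
      ((-1 : ℝ)^c.1 * (((c.1+q).choose q : ℕ) : ℝ) / (((c.1+q+1).factorial : ℕ) : ℝ)
        * ((c.2.factorial : ℝ))⁻¹)
    = (((p+q+1).factorial : ℝ))⁻¹ := by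
  rw [Finset.Nat.sum_antidiagonal_eq_sum_range_succ_mk]
  have hterm : ∀ j ∈ Finset.range (p+1),
      ((-1 : ℝ)^j * (((j+q).choose q : ℕ) : ℝ) / (((j+q+1).factorial : ℕ) : ℝ)
        * (((p-j).factorial : ℝ))⁻¹)
      = ((-1 : ℝ)^j * (p.choose j : ℝ) / ((q : ℝ) + j + 1))
          * ((p.factorial : ℝ) * q.factorial)⁻¹ := by
    intro j hj
    have hj' : j ≤ p := Nat.lt_succ_iff.mp (Finset.mem_range.mp hj)
    have n1 : ((j+q).factorial : ℝ) ≠ 0 := by exact_mod_cast Nat.factorial_ne_zero _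
    have n2 : (q.factorial : ℝ) ≠ 0 := by exact_mod_cast Nat.factorial_ne_zero _
    have n3 : (j.factorial : ℝ) ≠ 0 := by exact_mod_cast Nat.factorial_ne_zero _
    have n4 : ((p-j).factorial : ℝ) ≠ 0 := by exact_mod_cast Nat.factorial_ne_zero _
    have n5 : (p.factorial : ℝ) ≠ 0 := by exact_mod_cast Nat.factorial_ne_zero _
    have n0 : ((j:ℝ)+q+1) ≠ 0 := by positivity
    have hnat := Nat.choose_mul_factorial_mul_factorial (Nat.le_add_left q j)
    rw [Nat.add_sub_cancel] at hnat
    have h1 : (((j+q).choose q : ℕ) : ℝ) =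
        ((j+q).factorial : ℝ) / ((q.factorial : ℝ) * j.factorial) := by
      rw [eq_div_iff (mul_ne_zero n2 n3), ← mul_assoc]
      exact_mod_cast hnat
    have h2 : ((p.choose j : ℕ) : ℝ) =
        (p.factorial : ℝ) / ((j.factorial : ℝ) * (p-j).factorial) := by
      rw [eq_div_iff (mul_ne_zero n3 n4), ← mul_assoc]
      exact_mod_cast Nat.choose_mul_factorial_mul_factorial hj'
    have h3 : (((j+q+1).factorial : ℕ) : ℝ) = ((j:ℝ)+q+1) * ((j+q).factorial : ℝ) := by
      rw [Nat.factorial_succ]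
      push_cast
      ring
    rw [h1, h2, h3]
    field_simp
    ring
  rw [Finset.sum_congr rfl hterm, ← Finset.sum_mul, key0 p q]
  have n1 : ((p+q+1).factorial : ℝ) ≠ 0 := by exact_mod_cast Nat.factorial_ne_zero _
  have n5 : (p.factorial : ℝ) ≠ 0 := by exact_mod_cast Nat.factorial_ne_zero _
  have n2 : (q.factorial : ℝ) ≠ 0 := by exact_mod_cast Nat.factorial_ne_zero _
  field_simp

section
variable [Nonempty (Fin m)]

/-- The summand family for the RHS, indexed by `(j, q)`. -/
noncomputable def eF (A Y : Mat m) : ℕ × ℕ → Mat m := fun c =>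
  ((-1 : ℝ)^c.1 * (((c.1+c.2).choose c.2 : ℕ) : ℝ) / (((c.1+c.2+1).factorial : ℕ) : ℝ)) •
    (A ^ c.1 * Y * A ^ c.2)

lemma coeff_abs_le (j q : ℕ) :
    |(-1 : ℝ)^j * (((j+q).choose q : ℕ) : ℝ) / (((j+q+1).factorial : ℕ) : ℝ)| ≤
      ((j.factorial : ℝ) * q.factorial)⁻¹ := by
  have hnat := Nat.choose_mul_factorial_mul_factorial (Nat.le_add_left q j)
  rw [Nat.add_sub_cancel] at hnat
  have hle : (j+q).choose q * (j.factorial * q.factorial) ≤ (j+q+1).factorial := by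
    calc (j+q).choose q * (j.factorial * q.factorial)
        = (j+q).choose q * q.factorial * j.factorial := by ring
      _ = (j+q).factorial := hnat
      _ ≤ (j+q+1).factorial := Nat.factorial_le (Nat.le_succ _)
  have hF : (0:ℝ) < (((j+q+1).factorial : ℕ) : ℝ) := by
    exact_mod_cast Nat.factorial_pos _
  have hjq : (0:ℝ) < (j.factorial : ℝ) * q.factorial := by
    have := Nat.factorial_pos j
    have := Nat.factorial_pos q
    positivity
  rw [abs_div, abs_mul, abs_pow, abs_neg, abs_one, one_pow, one_mul,
    abs_of_nonneg (by positivity : (0:ℝ) ≤ (((j+q).choose q : ℕ) : ℝ)),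
    abs_of_nonneg (le_of_lt hF)]
  rw [div_le_iff₀ hF, inv_mul_eq_div, le_div_iff₀ hjq]
  exact_mod_cast hle

lemma summable_eF (A Y : Mat m) : Summable (eF A Y) := by
  refine Summable.of_norm_bounded
    (((summable_master (norm_nonneg A) (norm_nonneg A))).mul_left ‖Y‖) fun c => ?_
  obtain ⟨j, q⟩ := c
  rw [eF]
  rw [norm_smul ((-1 : ℝ)^j * (((j+q).choose q : ℕ) : ℝ) / (((j+q+1).factorial : ℕ) : ℝ))
    (A ^ j * Y * A ^ q)]
  have h1 : ‖A ^ j * Y * A ^ q‖ ≤ ‖A‖ ^ j * ‖Y‖ * ‖A‖ ^ q := by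
    calc ‖A ^ j * Y * A ^ q‖ ≤ ‖A ^ j * Y‖ * ‖A ^ q‖ := norm_mul_le _ _
      _ ≤ ‖A ^ j‖ * ‖Y‖ * ‖A ^ q‖ :=
          mul_le_mul_of_nonneg_right (norm_mul_le _ _) (norm_nonneg _)
      _ ≤ ‖A‖ ^ j * ‖Y‖ * ‖A‖ ^ q := by gcongr <;> exact norm_pow_le _ _
  calc ‖(-1 : ℝ)^j * (((j+q).choose q : ℕ) : ℝ) / (((j+q+1).factorial : ℕ) : ℝ)‖ *
        ‖A ^ j * Y * A ^ q‖
      ≤ ((j.factorial : ℝ) * q.factorial)⁻¹ * (‖A‖ ^ j * ‖Y‖ * ‖A‖ ^ q) := by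
        exact mul_le_mul (coeff_abs_le j q) h1 (norm_nonneg _) (by positivity)
    _ = ‖Y‖ * (‖A‖ ^ j / j.factorial * (‖A‖ ^ q / q.factorial)) := by
        have h3 : (j.factorial : ℝ) ≠ 0 := by exact_mod_cast Nat.factorial_ne_zero j
        have h4 : (q.factorial : ℝ) ≠ 0 := by exact_mod_cast Nat.factorial_ne_zero q
        field_simp

lemma inner_sum_eq (A X : Mat m) (q : ℕ) :
    ∑' j : ℕ, eF A (NormedSpace.exp A * X) (j, q) =
      ∑' p : ℕ, (((p + q + 1).factorial : ℝ))⁻¹ • (A ^ p * X * A ^ q) := by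
  set a := ‖A‖ with ha
  set F : ℕ → Mat m := fun j =>
    ((-1 : ℝ)^j * (((j+q).choose q : ℕ) : ℝ) / (((j+q+1).factorial : ℕ) : ℝ)) • A ^ j with hF
  set G : ℕ → Mat m := fun i => ((i.factorial : ℝ))⁻¹ • A ^ i with hG
  have hFnorm : Summable fun j => ‖F j‖ := by
    refine Summable.of_nonneg_of_le (fun _ => norm_nonneg _) (fun j => ?_)
      (((Real.summable_pow_div_factorial a).mul_left ((q.factorial : ℝ))⁻¹))
    rw [hF]
    rw [norm_smul ((-1 : ℝ)^j * (((j+q).choose q : ℕ) : ℝ) / (((j+q+1).factorial : ℕ) : ℝ))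
      (A ^ j)]
    have h3 : (j.factorial : ℝ) ≠ 0 := by exact_mod_cast Nat.factorial_ne_zero j
    have h4 : (q.factorial : ℝ) ≠ 0 := by exact_mod_cast Nat.factorial_ne_zero q
    calc ‖(-1 : ℝ)^j * (((j+q).choose q : ℕ) : ℝ) / (((j+q+1).factorial : ℕ) : ℝ)‖ * ‖A ^ j‖
        ≤ ((j.factorial : ℝ) * q.factorial)⁻¹ * a ^ j := by
          exact mul_le_mul (coeff_abs_le j q) (norm_pow_le _ _) (norm_nonneg _) (by positivity)
      _ = ((q.factorial : ℝ))⁻¹ * (a ^ j / j.factorial) := by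
          rw [mul_inv, div_eq_mul_inv]
          ring
  have hGnorm : Summable fun i => ‖G i‖ := NormedSpace.norm_expSeries_summable' (𝕂 := ℝ) A
  have hexp : NormedSpace.exp A = ∑' i, G i := by
    rw [NormedSpace.exp_eq_tsum ℝ]
  have hstep1 : ∀ j : ℕ, eF A (NormedSpace.exp A * X) (j, q) =
      (F j * NormedSpace.exp A) * (X * A ^ q) := by
    intro j
    rw [eF, hF]
    simp only [smul_mul_assoc]
    rw [mul_assoc, mul_assoc, mul_assoc]
  rw [tsum_congr hstep1]
  rw [Summable.tsum_mul_right (X * A ^ q) ((hFnorm.of_norm).mul_right _)]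
  rw [Summable.tsum_mul_right _ hFnorm.of_norm]
  rw [hexp, tsum_mul_tsum_eq_tsum_sum_antidiagonal_of_summable_norm hFnorm hGnorm]
  have hcoeff : ∀ p : ℕ, ∑ c ∈ Finset.HasAntidiagonal.antidiagonal p, F c.1 * G c.2 =
      (((p + q + 1).factorial : ℝ))⁻¹ • A ^ p := by
    intro p
    have hterm : ∀ c ∈ Finset.HasAntidiagonal.antidiagonal p, F c.1 * G c.2 =
        ((-1 : ℝ)^c.1 * (((c.1+q).choose q : ℕ) : ℝ) / (((c.1+q+1).factorial : ℕ) : ℝ)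
          * ((c.2.factorial : ℝ))⁻¹) • A ^ p := by
      intro c hc
      have hc' : c.1 + c.2 = p := Finset.HasAntidiagonal.mem_antidiagonal.mp hc
      rw [hF, hG]
      simp only []
      rw [smul_mul_smul_comm, ← pow_add, hc']
    rw [Finset.sum_congr rfl hterm, ← Finset.sum_smul, key p q]
  rw [tsum_congr hcoeff]
  have hsum2 : Summable fun p : ℕ => (((p + q + 1).factorial : ℝ))⁻¹ • A ^ p := by
    refine Summable.of_norm_bounded (Real.summable_pow_div_factorial a) fun p => ?_
    rw [norm_smul ((((p + q + 1).factorial : ℕ) : ℝ))⁻¹ (A ^ p)]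
    have h5 : ((p.factorial : ℝ)) ≤ ((p + q + 1).factorial : ℝ) := by
      exact_mod_cast Nat.factorial_le (by omega)
    have h6 : (0:ℝ) < (p.factorial : ℝ) := by exact_mod_cast Nat.factorial_pos p
    calc ‖(((p + q + 1).factorial : ℝ))⁻¹‖ * ‖A ^ p‖
        ≤ ((p.factorial : ℝ))⁻¹ * a ^ p := by
          refine mul_le_mul ?_ (norm_pow_le _ _) (norm_nonneg _) (by positivity)
          rw [norm_inv, Real.norm_natCast]
          exact inv_anti₀ h6 h5
      _ = a ^ p / p.factorial := by rw [inv_mul_eq_div, div_eq_div_iff] <;> positivity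
  rw [← Summable.tsum_mul_right (X * A ^ q) hsum2]
  refine tsum_congr fun p => ?_
  rw [smul_mul_assoc, mul_assoc]

lemma rhs_eq (A X : Mat m) :
    (∑' k : ℕ, (((k + 1).factorial : ℝ))⁻¹ •
        ((-adAction m A) ^ k) (NormedSpace.exp A * X)) =
      ∑' pq : ℕ × ℕ, (((pq.1 + pq.2 + 1).factorial : ℝ))⁻¹ • (A ^ pq.1 * X * A ^ pq.2) := by
  set Y := NormedSpace.exp A * X with hY
  have hk : ∀ k : ℕ, (((k + 1).factorial : ℝ))⁻¹ • ((-adAction m A) ^ k) Y =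
      ∑ c ∈ Finset.HasAntidiagonal.antidiagonal k, eF A Y c := by
    intro k
    rw [neg_ad_pow, Finset.smul_sum]
    refine Finset.sum_congr rfl fun c hc => ?_
    have hc' : c.1 + c.2 = k := Finset.HasAntidiagonal.mem_antidiagonal.mp hc
    rw [eF, hc', smul_smul]
    congr 1
    rw [div_eq_mul_inv]
    ring
  rw [tsum_congr hk, ← tsum_prod_eq_antidiagonal (summable_eF A Y)]
  -- swap the product order
  have hswap : ∑' c : ℕ × ℕ, eF A Y c = ∑' q : ℕ, ∑' j : ℕ, eF A Y (j, q) := by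
    rw [← (Equiv.prodComm ℕ ℕ).tsum_eq (eF A Y)]
    have hsum : Summable fun c : ℕ × ℕ => eF A Y ((Equiv.prodComm ℕ ℕ) c) :=
      (Equiv.prodComm ℕ ℕ).summable_iff.mpr (summable_eF A Y)
    rw [Summable.tsum_prod hsum]
    simp [Equiv.prodComm_apply]
  rw [hswap, tsum_congr (inner_sum_eq A X)]
  -- now go back to the product sum
  have hswap2 : ∑' pq : ℕ × ℕ, (((pq.1 + pq.2 + 1).factorial : ℝ))⁻¹ • (A ^ pq.1 * X * A ^ pq.2)
      = ∑' q : ℕ, ∑' p : ℕ, (((p + q + 1).factorial : ℝ))⁻¹ • (A ^ p * X * A ^ q) := by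
    rw [← (Equiv.prodComm ℕ ℕ).tsum_eq
      (fun pq : ℕ × ℕ => (((pq.1 + pq.2 + 1).factorial : ℝ))⁻¹ • (A ^ pq.1 * X * A ^ pq.2))]
    have hsum : Summable fun c : ℕ × ℕ =>
        (((((Equiv.prodComm ℕ ℕ) c).1 + ((Equiv.prodComm ℕ ℕ) c).2 + 1).factorial : ℝ))⁻¹ •
          (A ^ ((Equiv.prodComm ℕ ℕ) c).1 * X * A ^ ((Equiv.prodComm ℕ ℕ) c).2) :=
      (Equiv.prodComm ℕ ℕ).summable_iff.mpr (summable_g A X)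
    rw [Summable.tsum_prod hsum]
    simp [Equiv.prodComm_apply]
  rw [hswap2]

end

end Statement10Aux

/-- Series formula for the differential of the matrix exponential:
`(d exp)_A X = ∑_{k=0}^∞ (1/(k+1)!) • ((-ad A)^k) (exp A * X)`. -/
theorem statement10 (m : ℕ) (A X : Matrix (Fin m) (Fin m) ℝ) :
    fderiv ℝ (NormedSpace.exp) A X =
      ∑' k : ℕ, (((k + 1).factorial : ℝ))⁻¹ •
        ((-adAction m A) ^ k) (NormedSpace.exp A * X) := by
  rcases Nat.eq_zero_or_pos m with hm | hm
  · subst hm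
    haveI : Subsingleton (Matrix (Fin 0) (Fin 0) ℝ) :=
      ⟨fun a b => by ext i j; exact i.elim0⟩
    exact Subsingleton.elim _ _
  · haveI : Nonempty (Fin m) := ⟨⟨0, hm⟩⟩
    exact (Statement10Aux.fderiv_exp_apply A X).trans
      ((Statement10Aux.lhs_eq A X).trans (Statement10Aux.rhs_eq A X).symm)
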